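/- Let F be a nonempty bounded spectrahedron contained in a proper face of S^n_+, with A surjective, and fix ᾱ > 0. Then for every sequence α_k ∈ (0, ᾱ] with α_k → 0, the matrices X(α_k) (the unique log det maximizers over F(α_k)) form a bounded sequence, and every cluster point lies in F. -/

import Mathlib

open Matrix


lemma psd_diag {n : ℕ} {A : Matrix (Fin n) (Fin n) ℝ} (hA : A.PosSemidef) (i : Fin n) :
    0 ≤ A i i := by simpa using (posSemidef_iff_dotProduct_mulVec.mp hA).2 (Pi.single i 1)

lemma psd_sq {n : ℕ} {A : Matrix (Fin n) (Fin n) ℝ} (hA : A.PosSemidef) (i j : Fin n) :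
    A i j ^ 2 ≤ A i i * A j j := by
  rcases eq_or_ne i j with rfl | hij
  · nlinarith [psd_diag hA i]
  · have hsym : A j i = A i j := by
      simpa [Matrix.conjTranspose_apply] using congrFun (congrFun hA.1 i) j
    have key : ∀ a : ℝ, 0 ≤ A i i *  (a * a) + (2 * A i j) * a + A j j := by
      intro a
      have h := (posSemidef_iff_dotProduct_mulVec.mp hA).2 (Pi.single i a + Pi.single j 1)
      have hexp : dotProduct (star (Pi.single i a + Pi.single j 1))
          (A *ᵥ (Pi.single i a + Pi.single j 1))
          = A i i *  (a * a) + (2 * A i j) * a + A j j := by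
        rw [star_add, mulVec_add, dotProduct_add, add_dotProduct, add_dotProduct]
        simp [mulVec_single, hij, hij.symm, hsym]
        ring_nf
      rw [hexp] at h; exact h
    have hd := discrim_le_zero (a := A i i) (b := 2 * A i j) (c := A j j) key
    unfold discrim at hd
    nlinarith

lemma psd_diag_le_trace {n : ℕ} {A : Matrix (Fin n) (Fin n) ℝ} (hA : A.PosSemidef) (i : Fin n) :
    A i i ≤ A.trace := by
  rw [Matrix.trace]
  exact Finset.single_le_sum (f := fun j => A.diag j) (fun j _ => psd_diag hA j) (Finset.mem_univ i)

lemma psd_entry_le_trace {n : ℕ} {A : Matrix (Fin n) (Fin n) ℝ} (hA : A.PosSemidef) (i j : Fin n) :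
    |A i j| ≤ A.trace := by
  have h1 := psd_sq hA i j
  have h2 := psd_diag hA i
  have h3 := psd_diag hA j
  have h4 := psd_diag_le_trace hA i
  have h5 := psd_diag_le_trace hA j
  nlinarith [abs_nonneg (A i j), sq_abs (A i j)]

lemma psd_trace_zero {n : ℕ} {A : Matrix (Fin n) (Fin n) ℝ} (hA : A.PosSemidef)
    (h : A.trace = 0) : A = 0 := by
  have hdiag : ∀ i, A i i = 0 := by
    intro i
    have : ∑ j, A.diag j = 0 := h
    have := (Finset.sum_eq_zero_iff_of_nonneg (fun j _ => psd_diag hA j)).mp this i (Finset.mem_univ i)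
    exact this
  ext i j
  have := psd_sq hA i j
  rw [hdiag i, hdiag j] at this
  have : A i j ^ 2 ≤ 0 := by simpa using this
  have := pow_eq_zero_iff (n := 2) (by norm_num) |>.mp (le_antisymm this (sq_nonneg _))
  simpa using this

lemma psd_smul {n : ℕ} {A : Matrix (Fin n) (Fin n) ℝ} (hA : A.PosSemidef) {t : ℝ} (ht : 0 ≤ t) :
    (t • A).PosSemidef := by
  refine posSemidef_iff_dotProduct_mulVec.mpr ⟨?_, fun x => ?_⟩
  · unfold Matrix.IsHermitian
    rw [conjTranspose_smul, hA.1]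
    simp
  · rw [smul_mulVec, dotProduct_smul]
    exact mul_nonneg ht ((posSemidef_iff_dotProduct_mulVec.mp hA).2 x)

theorem stmt19 {n m : ℕ} (S : Fin m → Matrix (Fin n) (Fin n) ℝ)
    (hS : ∀ i, (S i).IsSymm) (b : Fin m → ℝ)
    (F : Set (Matrix (Fin n) (Fin n) ℝ))
    (hF : F = {X | X.PosSemidef ∧ ∀ i, (S i * X).trace = b i})
    (Fα : ℝ → Set (Matrix (Fin n) (Fin n) ℝ))
    (hFα : ∀ α : ℝ, Fα α = {X | X.PosSemidef ∧ ∀ i, (S i * X).trace = b i + α * (S i).trace})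
    (hne : F.Nonempty)
    (hbdd : ∃ M : ℝ, ∀ X ∈ F, ∀ i j, |X i j| ≤ M)
    (hproper : ∀ X ∈ F, ¬ X.PosDef)
    (hsurj : Function.Surjective
      (fun X : Matrix (Fin n) (Fin n) ℝ => fun i => (S i * X).trace))
    (αbar : ℝ) (hαbar : 0 < αbar)
    (α : ℕ → ℝ) (hα : ∀ k, 0 < α k ∧ α k ≤ αbar)
    (hαlim : Filter.Tendsto α Filter.atTop (nhds 0))
    (X : ℕ → Matrix (Fin n) (Fin n) ℝ)
    (hX : ∀ k, X k ∈ Fα (α k) ∧ (X k).PosDef ∧ ∀ Y ∈ Fα (α k), Y.det ≤ (X k).det) :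
    (∃ M : ℝ, ∀ k, ∀ i j, |X k i j| ≤ M) ∧
    ∀ L, MapClusterPt L Filter.atTop X → L ∈ F := by
  obtain ⟨X₀, hX₀F⟩ := hne
  rcases Nat.eq_zero_or_pos n with hn | hn
  · subst hn
    refine ⟨⟨0, fun k i j => i.elim0⟩, fun L _ => ?_⟩
    have : L = X₀ := by ext i j; exact i.elim0
    exact this ▸ hX₀F
  -- membership facts for X k
  have hmemα : ∀ k, (X k).PosSemidef ∧
      ∀ i, (S i * X k).trace = b i + α k * (S i).trace := by
    intro k
    have := (hX k).1
    rw [hFα] at this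
    exact this
  obtain ⟨M₀, hM₀⟩ := hbdd
  have hX₀mem : X₀.PosSemidef ∧ ∀ i, (S i * X₀).trace = b i := by rw [hF] at hX₀F; exact hX₀F
  -- Step A: the recession cone is trivial
  have hC : ∀ D : Matrix (Fin n) (Fin n) ℝ, D.PosSemidef → (∀ i, (S i * D).trace = 0) → D = 0 := by
    intro D hD hDc
    apply psd_trace_zero hD
    have hdiag : ∀ i0, D i0 i0 = 0 := by
      intro i0
      by_contra hne0
      have hpos : 0 < D i0 i0 := lt_of_le_of_ne (psd_diag hD i0) (Ne.symm hne0)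
      set t := (M₀ + |X₀ i0 i0| + 1) / D i0 i0 with ht_def
      have hM₀0 : 0 ≤ M₀ := le_trans (abs_nonneg _) (hM₀ X₀ hX₀F i0 i0)
      have ht : 0 ≤ t := div_nonneg (by positivity) hpos.le
      have hXt : X₀ + t • D ∈ F := by
        rw [hF]
        refine ⟨hX₀mem.1.add (psd_smul hD ht), fun i => ?_⟩
        rw [Matrix.mul_add, Matrix.trace_add, Matrix.mul_smul, Matrix.trace_smul, hDc i,
          hX₀mem.2 i]
        simp
      have hb := hM₀ _ hXt i0 i0
      have hts : t * D i0 i0 = M₀ + |X₀ i0 i0| + 1 := div_mul_cancel₀ _ hpos.ne'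
      have happ : (X₀ + t • D) i0 i0 = X₀ i0 i0 + t * D i0 i0 := by
        simp [Matrix.add_apply, Matrix.smul_apply, smul_eq_mul]
      rw [happ, hts] at hb
      have := le_trans (le_abs_self _) hb
      nlinarith [neg_abs_le (X₀ i0 i0)]
    rw [Matrix.trace]
    exact Finset.sum_eq_zero fun i _ => hdiag i
  -- Step B: compactness of normalized PSD matrices
  set K : Set (Matrix (Fin n) (Fin n) ℝ) := {D | D.PosSemidef ∧ D.trace = 1} with hK_def
  have hPSDclosed : IsClosed {D : Matrix (Fin n) (Fin n) ℝ | D.PosSemidef} := by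
    have hps : {D : Matrix (Fin n) (Fin n) ℝ | D.PosSemidef}
        = {D | Dᴴ = D} ∩ ⋂ x : Fin n → ℝ, {D | 0 ≤ dotProduct (star x) (D *ᵥ x)} := by
      ext D
      simp only [Set.mem_setOf_eq, Set.mem_inter_iff, Set.mem_iInter]
      exact posSemidef_iff_dotProduct_mulVec
    rw [hps]
    exact (isClosed_eq (continuous_id.matrix_conjTranspose) continuous_id).inter
      (isClosed_iInter fun x => isClosed_le continuous_const
        (continuous_const.dotProduct (continuous_id.matrix_mulVec continuous_const)))
  have hKclosed : IsClosed K := by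
    have : K = {D : Matrix (Fin n) (Fin n) ℝ | D.PosSemidef} ∩ {D | D.trace = 1} := by
      ext D; simp [hK_def]
    rw [this]
    exact hPSDclosed.inter (isClosed_eq (continuous_id.matrix_trace) continuous_const)
  have hKsub : K ⊆ (Set.univ.pi fun _ : Fin n => Set.univ.pi fun _ : Fin n => Set.Icc (-1:ℝ) 1) := by
    intro D hD
    refine Set.mem_univ_pi.mpr ?_
    intro i
    rw [Set.mem_univ_pi]
    intro j
    have h1 := psd_entry_le_trace hD.1 i j
    rw [hD.2] at h1
    exact ⟨(abs_le.mp h1).1, (abs_le.mp h1).2⟩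
  have hKcompact : IsCompact K :=
    (isCompact_univ_pi fun _ => isCompact_univ_pi fun _ => isCompact_Icc).of_isClosed_subset
      hKclosed hKsub
  have hn' : (n : ℝ) ≠ 0 := Nat.cast_ne_zero.mpr hn.ne'
  have hKne : K.Nonempty := by
    refine ⟨(n : ℝ)⁻¹ • 1, psd_smul Matrix.PosSemidef.one (by positivity), ?_⟩
    rw [Matrix.trace_smul, Matrix.trace_one]
    simp [hn']
  set f : Matrix (Fin n) (Fin n) ℝ → ℝ := fun D => ∑ i, ((S i * D).trace) ^ 2 with hf_def
  have hfc : Continuous f := continuous_finset_sum _ fun i _ =>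
    ((continuous_const.matrix_mul continuous_id).matrix_trace).pow 2
  obtain ⟨D₀, hD₀K, hD₀min⟩ := hKcompact.exists_isMinOn hKne hfc.continuousOn
  set c := f D₀ with hc_def
  have hc : 0 < c := by
    rcases lt_or_eq_of_le (Finset.sum_nonneg fun i _ => sq_nonneg ((S i * D₀).trace) : 0 ≤ c) with h | h
    · exact h
    · exfalso
      have hzero : ∀ i, (S i * D₀).trace = 0 := by
        intro i
        have := (Finset.sum_eq_zero_iff_of_nonneg (fun i _ => sq_nonneg ((S i * D₀).trace))).mp
          h.symm i (Finset.mem_univ i)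
        exact pow_eq_zero_iff (two_ne_zero) |>.mp this
      have := hC D₀ hD₀K.1 hzero
      rw [this] at hD₀K
      simpa using hD₀K.2
  set B := ∑ i : Fin m, (|b i| + αbar * |(S i).trace|) ^ 2 with hB_def
  have hBc : 0 ≤ B / c := div_nonneg (Finset.sum_nonneg fun i _ => sq_nonneg _) hc.le
  -- trace bound
  have htr : ∀ k, (X k).trace ≤ Real.sqrt (B / c) := by
    intro k
    set t := (X k).trace with ht_def
    have ht0 : 0 ≤ t := Finset.sum_nonneg fun i _ => psd_diag (hmemα k).1 i
    rcases eq_or_lt_of_le ht0 with h | h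
    · rw [← h]; exact Real.sqrt_nonneg _
    · have hDK : t⁻¹ • X k ∈ K := by
        refine ⟨psd_smul (hmemα k).1 (inv_nonneg.mpr ht0), ?_⟩
        rw [Matrix.trace_smul]
        simpa [ht_def] using inv_mul_cancel₀ h.ne'
      have hmin := hD₀min hDK
      have hfval : f (t⁻¹ • X k) = t⁻¹ ^ 2 * ∑ i, (b i + α k * (S i).trace) ^ 2 := by
        rw [hf_def]
        simp only []
        rw [Finset.mul_sum]
        refine Finset.sum_congr rfl fun i _ => ?_
        rw [Matrix.mul_smul, Matrix.trace_smul, smul_eq_mul, mul_pow, (hmemα k).2 i]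
      have hsumle : ∑ i, (b i + α k * (S i).trace) ^ 2 ≤ B := by
        refine Finset.sum_le_sum fun i _ => ?_
        have h1 : |b i + α k * (S i).trace| ≤ |b i| + αbar * |(S i).trace| := by
          refine le_trans (abs_add_le _ _) ?_
          rw [abs_mul, abs_of_pos (hα k).1]
          exact add_le_add le_rfl (mul_le_mul_of_nonneg_right (hα k).2 (abs_nonneg _))
        calc (b i + α k * (S i).trace) ^ 2 = |b i + α k * (S i).trace| ^ 2 := (sq_abs _).symm
          _ ≤ (|b i| + αbar * |(S i).trace|) ^ 2 := by
              exact pow_le_pow_left₀ (abs_nonneg _) h1 2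
      have hcle : c ≤ t⁻¹ ^ 2 * B := by
        calc c ≤ f (t⁻¹ • X k) := hmin
          _ = t⁻¹ ^ 2 * ∑ i, (b i + α k * (S i).trace) ^ 2 := hfval
          _ ≤ t⁻¹ ^ 2 * B := by
              exact mul_le_mul_of_nonneg_left hsumle (by positivity)
      have ht2 : t ^ 2 ≤ B / c := by
        rw [le_div_iff₀ hc]
        have h2 : t ^ 2 * c ≤ t ^ 2 * (t⁻¹ ^ 2 * B) := mul_le_mul_of_nonneg_left hcle (sq_nonneg _)
        have h3 : t ^ 2 * (t⁻¹ ^ 2 * B) = B := by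
          field_simp
        linarith
      exact (Real.le_sqrt ht0 hBc).mpr ht2
  constructor
  · refine ⟨Real.sqrt (B / c), fun k i j => ?_⟩
    exact le_trans (psd_entry_le_trace (hmemα k).1 i j) (htr k)
  · intro L hL
    rw [hF]
    constructor
    · have hmap : Filter.map X Filter.atTop ≤ Filter.principal {D : Matrix (Fin n) (Fin n) ℝ | D.PosSemidef} := by
        rw [Filter.le_principal_iff, Filter.mem_map]
        exact Filter.Eventually.of_forall fun k => (hmemα k).1
      have h1 : ClusterPt L (Filter.principal {D : Matrix (Fin n) (Fin n) ℝ | D.PosSemidef}) :=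
        (mapClusterPt_def.mp hL).mono hmap
      have h2 := mem_closure_iff_clusterPt.mpr h1
      rwa [hPSDclosed.closure_eq] at h2
    · intro i
      have hcont : Continuous fun D : Matrix (Fin n) (Fin n) ℝ => (S i * D).trace :=
        (continuous_const.matrix_mul continuous_id).matrix_trace
      have h2 := MapClusterPt.continuousAt_comp (f := fun D : Matrix (Fin n) (Fin n) ℝ => (S i * D).trace) hcont.continuousAt hL
      have h3 : Filter.Tendsto (fun k => (S i * X k).trace) Filter.atTop (nhds (b i)) := by
        have heq : (fun k => (S i * X k).trace) = fun k => b i + α k * (S i).trace :=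
          funext fun k => (hmemα k).2 i
        rw [heq]
        have := Filter.Tendsto.const_add (b i) (hαlim.mul_const ((S i).trace))
        simpa using this
      exact eq_of_nhds_neBot ((mapClusterPt_def.mp h2).mono h3)
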